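/- Consider the noisy difference equation x_k - C(n,1)ρ x_{k-1} + ⋯ + (-1)^n ρ^n x_{k-n} = v_k for k ≥ n with |v_k| ≤ ε, all characteristic roots equal to ρ ∈ (0,1), and ‖(x_0,…,x_{n-1})‖_∞ ≤ 1. Then for every t ≥ n, x_t ≤ α_{t,n} + ε Σ_{k=n}^{t} C(t-k+n-1, n-1) ρ^{t-k} < α_n + ε(1-ρ)^{-n}, where α_{t,n} = Σ_{i=0}^{n-1} |P_i(t)| ρ^{t-i} and α_n = max_{k≥n} α_{k,n}. -/

import Mathlib

/-- Lagrange basis polynomial at nodes 0,1,…,n-1, evaluated at a natural number k. -/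
noncomputable def lagrangeP (n i : ℕ) (k : ℕ) : ℝ :=
  ∏ j ∈ (Finset.range n).erase i, ((k : ℝ) - (j : ℝ)) / ((i : ℝ) - (j : ℝ))

open Finset Polynomial

lemma aux_alt (n : ℕ) (f : ℕ → ℝ) :
    ∑ j ∈ Finset.range (n+2), (-1:ℝ)^j * ((n+1).choose j : ℝ) * f j
      = ∑ j ∈ Finset.range (n+1), (-1:ℝ)^j * (n.choose j : ℝ) * (f j - f (j+1)) := by
  have hD : ∑ j ∈ Finset.range (n+1), (-1:ℝ)^j * (n.choose (j+1) : ℝ) * f (j+1)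
      = ∑ j ∈ Finset.range n, (-1:ℝ)^j * (n.choose (j+1) : ℝ) * f (j+1) := by
    rw [Finset.sum_range_succ]; simp [Nat.choose_succ_self]
  have hA : ∑ j ∈ Finset.range (n+1), (-1:ℝ)^j * (n.choose j : ℝ) * f j
      = f 0 - ∑ j ∈ Finset.range n, (-1:ℝ)^j * (n.choose (j+1) : ℝ) * f (j+1) := by
    rw [Finset.sum_range_succ' _ n, sub_eq_add_neg, add_comm, ← Finset.sum_neg_distrib]
    congr 1
    · simp
    · exact Finset.sum_congr rfl fun j _ => by ring
  have hL : ∑ j ∈ Finset.range (n+2), (-1:ℝ)^j * ((n+1).choose j : ℝ) * f j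
      = (∑ j ∈ Finset.range (n+1), -((-1:ℝ)^j * (n.choose j : ℝ) * f (j+1)))
        + (∑ j ∈ Finset.range (n+1), -((-1:ℝ)^j * (n.choose (j+1) : ℝ) * f (j+1))) + f 0 := by
    rw [Finset.sum_range_succ' _ (n+1), ← Finset.sum_add_distrib]
    congr 1
    · exact Finset.sum_congr rfl fun j _ => by
        rw [Nat.choose_succ_succ, Nat.cast_add]; ring
    · simp
  simp only [mul_sub, Finset.sum_sub_distrib, Finset.sum_neg_distrib] at *
  rw [hL, hA, hD]
  ring

lemma aux_key (n : ℕ) (p : Polynomial ℝ) (hp : p.degree < (n : ℕ)) :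
    ∀ r : ℝ, ∑ j ∈ Finset.range (n+1), (-1:ℝ)^j * (n.choose j : ℝ) * p.eval (r - j) = 0 := by
  induction n generalizing p with
  | zero =>
    intro r
    have : p = 0 := Polynomial.degree_eq_bot.mp (Nat.WithBot.lt_zero_iff.mp (by exact_mod_cast hp))
    simp [this]
  | succ n ih =>
    intro r
    set q : Polynomial ℝ := p.comp (X + C 1) - p with hq
    have hqd : q.degree < (n : ℕ) := by
      rcases eq_or_ne p.natDegree 0 with h0 | h0
      · obtain ⟨a, rfl⟩ := Polynomial.natDegree_eq_zero.mp h0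
        simp only [hq, Polynomial.C_comp, sub_self, Polynomial.degree_zero]
        exact WithBot.bot_lt_coe n
      · have hp0 : p ≠ 0 := fun h => h0 (by simp [h])
        have hXC : (X + C (1:ℝ)).natDegree = 1 := Polynomial.natDegree_X_add_C 1
        have hdc : (p.comp (X + C 1)).natDegree = p.natDegree := by
          rw [Polynomial.natDegree_comp, hXC, mul_one]
        have hlc : (p.comp (X + C 1)).leadingCoeff = p.leadingCoeff := by
          rw [Polynomial.leadingCoeff_comp (by rw [hXC]; norm_num),
            (Polynomial.monic_X_add_C (1:ℝ)).leadingCoeff, one_pow, mul_one]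
        have hc0 : p.comp (X + C 1) ≠ 0 := by
          intro h
          exact hp0 (Polynomial.leadingCoeff_eq_zero.mp (by rw [← hlc, h, Polynomial.leadingCoeff_zero]))
        have hdeg : (p.comp (X + C 1)).degree = p.degree := by
          rw [Polynomial.degree_eq_natDegree hc0, Polynomial.degree_eq_natDegree hp0, hdc]
        have h2 := Polynomial.degree_sub_lt hdeg hc0 hlc
        rw [hdeg] at h2
        calc q.degree < p.degree := h2
          _ ≤ (n : ℕ) := by
            rw [Polynomial.degree_eq_natDegree hp0] at hp ⊢
            exact_mod_cast Nat.lt_succ_iff.mp (by exact_mod_cast hp)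
    have key := aux_alt n (fun j => p.eval (r - j))
    rw [key]
    have : ∀ j ∈ Finset.range (n+1), (-1:ℝ)^j * (n.choose j : ℝ) *
        ((fun j : ℕ => p.eval (r - j)) j - (fun j : ℕ => p.eval (r - j)) (j+1))
        = (-1:ℝ)^j * (n.choose j : ℝ) * q.eval ((r-1) - j) := by
      intro j _
      simp only [hq, Polynomial.eval_sub, Polynomial.eval_comp, Polynomial.eval_add,
        Polynomial.eval_X, Polynomial.eval_C]
      push_cast
      ring_nf
    rw [Finset.sum_congr rfl this, ih q hqd (r-1)]

lemma aux_prod_asc (a k : ℕ) : ∏ i ∈ Finset.range k, (a + i) = a.ascFactorial k := by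
  induction k with
  | zero => simp
  | succ k ih => rw [Finset.prod_range_succ, ih, Nat.ascFactorial_succ, mul_comm]

lemma aux_pos (ρ : ℝ) (h0 : 0 < ρ) (h1 : ρ < 1) (s : ℕ) :
    ∀ m : ℕ, (1-ρ)^(s+1) * ∑ j ∈ Finset.range (m+1), ((j+s).choose s : ℝ) * ρ^j < 1 := by
  have hρ1 : 0 < 1 - ρ := by linarith
  induction s with
  | zero =>
    intro m
    simp only [Nat.add_zero, zero_add, Nat.choose_zero_right, Nat.cast_one, one_mul, pow_one]
    have := geom_sum_mul ρ (m+1)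
    have h : (1-ρ) * ∑ j ∈ Finset.range (m+1), ρ^j = 1 - ρ^(m+1) := by
      have := geom_sum_mul ρ (m+1)
      nlinarith [this]
    rw [h]
    nlinarith [pow_pos h0 (m+1)]
  | succ s ih =>
    intro m
    have hCL : (1-ρ) * ∑ j ∈ Finset.range (m+1), ((j+(s+1)).choose (s+1) : ℝ) * ρ^j
        ≤ ∑ j ∈ Finset.range (m+1), ((j+s).choose s : ℝ) * ρ^j := by
      have hT1 : ∑ j ∈ Finset.range (m+1), ((j+(s+1)).choose (s+1) : ℝ) * ρ^j
          = 1 + ∑ j ∈ Finset.range m, (((j+1+s).choose s : ℝ) + ((j+1+s).choose (s+1) : ℝ)) * ρ^(j+1) := by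
        rw [Finset.sum_range_succ' _ m]
        simp only [Nat.zero_add, Nat.choose_self, Nat.cast_one, pow_zero, mul_one]
        rw [add_comm]
        congr 1
        refine Finset.sum_congr rfl fun j _ => ?_
        have : j + 1 + (s+1) = (j+1+s) + 1 := by ring
        rw [this, Nat.choose_succ_succ, Nat.cast_add]
      have hT2 : ρ * ∑ j ∈ Finset.range (m+1), ((j+(s+1)).choose (s+1) : ℝ) * ρ^j
          = (∑ j ∈ Finset.range m, ((j+(s+1)).choose (s+1) : ℝ) * ρ^(j+1))
            + ((m+(s+1)).choose (s+1) : ℝ) * ρ^(m+1) := by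
        rw [Finset.mul_sum, Finset.sum_range_succ]
        congr 1
        · refine Finset.sum_congr rfl fun j _ => by ring
        · ring
      have hT3 : ∑ j ∈ Finset.range (m+1), ((j+s).choose s : ℝ) * ρ^j
          = 1 + ∑ j ∈ Finset.range m, ((j+1+s).choose s : ℝ) * ρ^(j+1) := by
        rw [Finset.sum_range_succ' _ m]
        simp only [Nat.zero_add, Nat.choose_self, Nat.cast_one, pow_zero, mul_one]
        rw [add_comm]
      have hsplit : ∑ j ∈ Finset.range m, (((j+1+s).choose s : ℝ) + ((j+1+s).choose (s+1) : ℝ)) * ρ^(j+1)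
          = (∑ j ∈ Finset.range m, ((j+1+s).choose s : ℝ) * ρ^(j+1))
            + ∑ j ∈ Finset.range m, ((j+(s+1)).choose (s+1) : ℝ) * ρ^(j+1) := by
        rw [← Finset.sum_add_distrib]
        refine Finset.sum_congr rfl fun j _ => ?_
        have : j + (s+1) = j + 1 + s := by ring
        rw [this]; ring
      have hnn : (0:ℝ) ≤ ((m+(s+1)).choose (s+1) : ℝ) * ρ^(m+1) :=
        mul_nonneg (Nat.cast_nonneg _) (le_of_lt (pow_pos h0 _))
      have expand : (1-ρ) * ∑ j ∈ Finset.range (m+1), ((j+(s+1)).choose (s+1) : ℝ) * ρ^j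
          = (∑ j ∈ Finset.range (m+1), ((j+s).choose s : ℝ) * ρ^j)
            - ((m+(s+1)).choose (s+1) : ℝ) * ρ^(m+1) := by
        rw [sub_mul, one_mul, hT2, hT1, hsplit, hT3]
        ring
      rw [expand]
      linarith
    have hpos : 0 ≤ ∑ j ∈ Finset.range (m+1), ((j+(s+1)).choose (s+1) : ℝ) * ρ^j :=
      Finset.sum_nonneg fun j _ => mul_nonneg (Nat.cast_nonneg _) (le_of_lt (pow_pos h0 _))
    calc (1-ρ)^(s+1+1) * ∑ j ∈ Finset.range (m+1), ((j+(s+1)).choose (s+1) : ℝ) * ρ^j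
        = (1-ρ)^(s+1) * ((1-ρ) * ∑ j ∈ Finset.range (m+1), ((j+(s+1)).choose (s+1) : ℝ) * ρ^j) := by ring
      _ ≤ (1-ρ)^(s+1) * ∑ j ∈ Finset.range (m+1), ((j+s).choose s : ℝ) * ρ^j :=
          mul_le_mul_of_nonneg_left hCL (le_of_lt (pow_pos hρ1 _))
      _ < 1 := ih m

noncomputable def binomPoly (s : ℕ) : Polynomial ℝ :=
  Polynomial.C ((s.factorial : ℝ))⁻¹ * ∏ i ∈ Finset.range s, (Polynomial.X + Polynomial.C ((i:ℝ)+1))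

lemma binomPoly_degree (s : ℕ) : (binomPoly s).degree < ((s+1 : ℕ) : WithBot ℕ) := by
  have h1 : (binomPoly s).natDegree ≤ s := by
    rw [binomPoly]
    refine le_trans (Polynomial.natDegree_mul_le) ?_
    simp only [Polynomial.natDegree_C, zero_add]
    refine le_trans (Polynomial.natDegree_prod_le _ _) ?_
    have : ∀ i ∈ Finset.range s, (Polynomial.X + Polynomial.C ((i:ℝ)+1)).natDegree = 1 :=
      fun i _ => Polynomial.natDegree_X_add_C _
    rw [Finset.sum_congr rfl this]
    simp
  calc (binomPoly s).degree ≤ ((binomPoly s).natDegree : WithBot ℕ) := Polynomial.degree_le_natDegree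
    _ ≤ (s : WithBot ℕ) := by exact_mod_cast h1
    _ < ((s+1:ℕ) : WithBot ℕ) := by exact_mod_cast Nat.lt_succ_self s

lemma binomPoly_eval_nat (s m : ℕ) : (binomPoly s).eval (m:ℝ) = ((m+s).choose s : ℝ) := by
  have hprod : ∏ i ∈ Finset.range s, ((m:ℝ) + ((i:ℝ)+1)) = ((m+1).ascFactorial s : ℝ) := by
    rw [← aux_prod_asc (m+1) s]
    push_cast
    refine Finset.prod_congr rfl fun i _ => by ring
  simp only [binomPoly, Polynomial.eval_mul, Polynomial.eval_C, Polynomial.eval_prod,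
    Polynomial.eval_add, Polynomial.eval_X]
  rw [hprod, Nat.ascFactorial_eq_factorial_mul_choose]
  push_cast
  rw [← mul_assoc, inv_mul_cancel₀ (by exact_mod_cast (Nat.factorial_pos s).ne'), one_mul]

lemma binomPoly_eval_neg (s d : ℕ) (h1 : 1 ≤ d) (h2 : d ≤ s) :
    (binomPoly s).eval (-(d:ℝ)) = 0 := by
  simp only [binomPoly, Polynomial.eval_mul, Polynomial.eval_C, Polynomial.eval_prod,
    Polynomial.eval_add, Polynomial.eval_X]
  rw [Finset.prod_eq_zero (i := d - 1) (by simp; omega) (by push_cast [Nat.cast_sub h1]; ring)]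
  simp

lemma lag_eval_eq (n i : ℕ) (k : ℕ) :
    lagrangeP n i k = (Lagrange.basis (Finset.range n) (fun j : ℕ => (j:ℝ)) i).eval (k:ℝ) := by
  rw [lagrangeP, Lagrange.basis, Polynomial.eval_prod]
  refine Finset.prod_congr rfl fun j _ => ?_
  rw [Lagrange.basisDivisor, Polynomial.eval_mul, Polynomial.eval_C, Polynomial.eval_sub,
    Polynomial.eval_X, Polynomial.eval_C, div_eq_mul_inv, mul_comm]

/-- Bounded-noise autoregression with all characteristic roots equal to ρ:
    upper bounds on the solution. -/
theorem stmt17 (n : ℕ) (hn : 1 ≤ n) (ρ ε : ℝ) (hρ0 : 0 < ρ) (hρ1 : ρ < 1) (hε : 0 < ε)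
    (x v : ℕ → ℝ) (hv : ∀ k : ℕ, n ≤ k → |v k| ≤ ε)
    (hrec : ∀ k : ℕ,
      ∑ j ∈ Finset.range (n + 1), (-1 : ℝ) ^ j * (n.choose j) * ρ ^ j * x (k + n - j)
        = v (k + n))
    (hinit : ∀ i : ℕ, i < n → |x i| ≤ 1)
    (A : ℝ)
    (hA1 : ∀ k : ℕ, n ≤ k → ∑ i ∈ Finset.range n, |lagrangeP n i k| * ρ ^ (k - i) ≤ A)
    (hA2 : ∃ k : ℕ, n ≤ k ∧ ∑ i ∈ Finset.range n, |lagrangeP n i k| * ρ ^ (k - i) = A) :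
    ∀ t : ℕ, n ≤ t →
      x t ≤ (∑ i ∈ Finset.range n, |lagrangeP n i t| * ρ ^ (t - i))
              + ε * ∑ k ∈ Finset.Icc n t, ((t - k + n - 1).choose (n - 1) : ℝ) * ρ ^ (t - k) ∧
      (∑ i ∈ Finset.range n, |lagrangeP n i t| * ρ ^ (t - i))
          + ε * ∑ k ∈ Finset.Icc n t, ((t - k + n - 1).choose (n - 1) : ℝ) * ρ ^ (t - k)
        < A + ε * ((1 - ρ) ^ n)⁻¹ := by
  obtain ⟨s, rfl⟩ : ∃ s, n = s + 1 := ⟨n - 1, (Nat.succ_pred_eq_of_pos hn).symm⟩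
  have hρne : ρ ≠ 0 := hρ0.ne'
  set L : ℕ → Polynomial ℝ := fun i => Lagrange.basis (Finset.range (s+1)) (fun j : ℕ => (j:ℝ)) i
    with hL
  have hinj : Set.InjOn (fun j : ℕ => (j:ℝ)) (Finset.range (s+1)) :=
    fun a _ b _ h => Nat.cast_injective h
  have hLdeg : ∀ i ∈ Finset.range (s+1), (L i).degree < ((s+1 : ℕ) : WithBot ℕ) := by
    intro i hi
    calc (L i).degree ≤ ((L i).natDegree : WithBot ℕ) := Polynomial.degree_le_natDegree
      _ = ((s+1) - 1 : ℕ) := by rw [Lagrange.natDegree_basis hinj hi]; simp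
      _ < ((s+1 : ℕ) : WithBot ℕ) := by exact_mod_cast Nat.lt_succ_self s
  set B : Polynomial ℝ := binomPoly s with hB
  set F : ℕ → ℝ := fun t =>
      (∑ i ∈ Finset.range (s+1), x i * (L i).eval (t:ℝ) * ρ ^ ((t:ℤ) - (i:ℤ)))
        + ∑ k ∈ Finset.Icc (s+1) t, v k * B.eval ((t:ℝ) - (k:ℝ)) * ρ ^ ((t:ℤ) - (k:ℤ))
    with hF
  -- recurrence for F
  have hrecF : ∀ t : ℕ, s + 1 ≤ t →
      ∑ j ∈ Finset.range (s+2), (-1:ℝ)^j * ((s+1).choose j : ℝ) * ρ^j * F (t - j) = v t := by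
    intro t ht
    have hsplit : ∀ j ∈ Finset.range (s+2),
        (-1:ℝ)^j * ((s+1).choose j : ℝ) * ρ^j * F (t - j)
        = (∑ i ∈ Finset.range (s+1),
            (-1:ℝ)^j * ((s+1).choose j : ℝ) * (x i * (L i).eval ((t:ℝ) - j) * ρ ^ ((t:ℤ) - i)))
          + ∑ k ∈ Finset.Icc (s+1) t, (if j + k ≤ t then
              (-1:ℝ)^j * ((s+1).choose j : ℝ) * (v k * B.eval ((t:ℝ) - j - k) * ρ ^ ((t:ℤ) - k))
              else 0) := by
      intro j hj
      have hj' : j ≤ s+1 := by have := Finset.mem_range.mp hj; omega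
      have hjt : j ≤ t := le_trans hj' ht
      have hcast1 : ((t - j : ℕ) : ℝ) = (t:ℝ) - j := by
        push_cast [Nat.cast_sub hjt]; ring
      have hcast2 : ((t - j : ℕ) : ℤ) = (t:ℤ) - j := by omega
      have hIccF : Finset.Icc (s+1) (t - j) = (Finset.Icc (s+1) t).filter (fun k => j + k ≤ t) := by
        ext k
        simp only [Finset.mem_Icc, Finset.mem_filter]
        omega
      rw [hF]
      dsimp only
      rw [hcast1, hcast2, hIccF, Finset.sum_filter, mul_add]
      congr 1
      · rw [Finset.mul_sum]
        refine Finset.sum_congr rfl fun i hi => ?_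
        have hcomb : ρ^j * ρ^((t:ℤ) - j - i) = ρ^((t:ℤ) - i) := by
          rw [← zpow_natCast ρ j, ← zpow_add₀ hρne]
          congr 1
          ring
        linear_combination ((-1:ℝ)^j * ((s+1).choose j : ℝ) * x i * (L i).eval ((t:ℝ) - j)) * hcomb
      · rw [Finset.mul_sum]
        refine Finset.sum_congr rfl fun k hk => ?_
        by_cases hcond : j + k ≤ t
        · rw [if_pos hcond, if_pos hcond]
          have hcomb : ρ^j * ρ^((t:ℤ) - j - k) = ρ^((t:ℤ) - k) := by
            rw [← zpow_natCast ρ j, ← zpow_add₀ hρne]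
            congr 1
            ring
          linear_combination ((-1:ℝ)^j * ((s+1).choose j : ℝ) * v k * B.eval ((t:ℝ) - j - k)) * hcomb
        · rw [if_neg hcond, if_neg hcond, mul_zero]
    rw [Finset.sum_congr rfl hsplit, Finset.sum_add_distrib]
    have hHom : ∑ j ∈ Finset.range (s+2), ∑ i ∈ Finset.range (s+1),
        (-1:ℝ)^j * ((s+1).choose j : ℝ) * (x i * (L i).eval ((t:ℝ) - j) * ρ ^ ((t:ℤ) - i)) = 0 := by
      rw [Finset.sum_comm]
      refine Finset.sum_eq_zero fun i hi => ?_
      have hk := aux_key (s+1) (L i) (hLdeg i hi) (t:ℝ)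
      calc ∑ j ∈ Finset.range (s+2),
            (-1:ℝ)^j * ((s+1).choose j : ℝ) * (x i * (L i).eval ((t:ℝ) - j) * ρ ^ ((t:ℤ) - i))
          = (x i * ρ ^ ((t:ℤ) - i)) * ∑ j ∈ Finset.range (s+1+1),
              (-1:ℝ)^j * ((s+1).choose j : ℝ) * (L i).eval ((t:ℝ) - j) := by
            rw [Finset.mul_sum]
            exact Finset.sum_congr rfl fun j _ => by ring
        _ = 0 := by rw [hk, mul_zero]
    have hPart : ∑ j ∈ Finset.range (s+2), ∑ k ∈ Finset.Icc (s+1) t,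
        (if j + k ≤ t then
          (-1:ℝ)^j * ((s+1).choose j : ℝ) * (v k * B.eval ((t:ℝ) - j - k) * ρ ^ ((t:ℤ) - k))
          else 0) = v t := by
      rw [Finset.sum_comm]
      have hinner : ∀ k ∈ Finset.Icc (s+1) t,
          (∑ j ∈ Finset.range (s+2), (if j + k ≤ t then
            (-1:ℝ)^j * ((s+1).choose j : ℝ) * (v k * B.eval ((t:ℝ) - j - k) * ρ ^ ((t:ℤ) - k))
            else 0)) = if k = t then v t else 0 := by
        intro k hk
        obtain ⟨hk1, hk2⟩ := Finset.mem_Icc.mp hk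
        rcases eq_or_lt_of_le hk2 with rfl | hkt
        · rw [if_pos rfl]
          rw [Finset.sum_eq_single 0]
          · rw [if_pos (by omega)]
            have h0 : (k:ℝ) - (0:ℕ) - k = ((0:ℕ):ℝ) := by push_cast; ring
            rw [h0, hB, binomPoly_eval_nat]
            simp
          · intro j _ hj0
            rw [if_neg (by omega)]
          · intro h
            exact absurd (Finset.mem_range.mpr (by omega)) h
        · rw [if_neg (by omega)]
          have hmcast : (t:ℝ) - k = ((t - k : ℕ) : ℝ) := by
            push_cast [Nat.cast_sub hk2]; ring
          have hmask : ∀ j ∈ Finset.range (s+2),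
              (if j + k ≤ t then
                (-1:ℝ)^j * ((s+1).choose j : ℝ) * (v k * B.eval ((t:ℝ) - j - k) * ρ ^ ((t:ℤ) - k))
                else 0)
              = (-1:ℝ)^j * ((s+1).choose j : ℝ) * (v k * B.eval (((t - k : ℕ):ℝ) - j) * ρ ^ ((t:ℤ) - k)) := by
            intro j hj
            have hjs : j ≤ s+1 := by have := Finset.mem_range.mp hj; omega
            have harg : (t:ℝ) - j - k = ((t - k : ℕ):ℝ) - j := by
              rw [← hmcast]; ring
            by_cases hcond : j + k ≤ t
            · rw [if_pos hcond, harg]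
            · rw [if_neg hcond]
              have hm1 : 1 ≤ t - k := by omega
              have hd1 : 1 ≤ j - (t - k) := by omega
              have hd2 : j - (t - k) ≤ s := by omega
              have hBz : B.eval (((t - k : ℕ):ℝ) - j) = 0 := by
                have : ((t - k : ℕ):ℝ) - j = -(((j - (t-k) : ℕ)):ℝ) := by
                  push_cast [Nat.cast_sub (by omega : t - k ≤ j)]
                  ring
                rw [this, hB, binomPoly_eval_neg s _ hd1 hd2]
              rw [hBz]
              ring
          rw [Finset.sum_congr rfl hmask]
          have hkey := aux_key (s+1) B (binomPoly_degree s) (((t - k:ℕ)):ℝ)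
          calc ∑ j ∈ Finset.range (s+2),
              (-1:ℝ)^j * ((s+1).choose j : ℝ) * (v k * B.eval (((t - k : ℕ):ℝ) - j) * ρ ^ ((t:ℤ) - k))
              = (v k * ρ ^ ((t:ℤ) - k)) * ∑ j ∈ Finset.range (s+1+1),
                  (-1:ℝ)^j * ((s+1).choose j : ℝ) * B.eval (((t - k : ℕ):ℝ) - j) := by
                rw [Finset.mul_sum]
                exact Finset.sum_congr rfl fun j _ => by ring
            _ = 0 := by rw [hkey, mul_zero]
      rw [Finset.sum_congr rfl hinner, Finset.sum_ite_eq' (Finset.Icc (s+1) t) t (fun _ => v t),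
        if_pos (Finset.mem_Icc.mpr ⟨ht, le_rfl⟩)]
    rw [hHom, hPart, zero_add]
  -- x = F
  have hform : ∀ t : ℕ, x t = F t := by
    intro t
    induction t using Nat.strong_induction_on with
    | _ t ih =>
      rcases lt_or_ge t (s+1) with ht | ht
      · -- base case
        have hIcc : Finset.Icc (s+1) t = ∅ := Finset.Icc_eq_empty (by omega)
        rw [hF]
        simp only [hIcc, Finset.sum_empty, add_zero]
        rw [Finset.sum_eq_single t]
        · rw [show (L t).eval (t:ℝ) = (Lagrange.basis (Finset.range (s+1)) (fun j : ℕ => (j:ℝ)) t).eval ((fun j : ℕ => (j:ℝ)) t) from rfl,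
            Lagrange.eval_basis_self hinj (Finset.mem_range.mpr ht), sub_self, zpow_zero]
          ring
        · intro i _ hne
          rw [show (L i).eval (t:ℝ) = (Lagrange.basis (Finset.range (s+1)) (fun j : ℕ => (j:ℝ)) i).eval ((fun j : ℕ => (j:ℝ)) t) from rfl,
            Lagrange.eval_basis_of_ne hne (Finset.mem_range.mpr ht)]
          ring
        · intro h
          exact absurd (Finset.mem_range.mpr ht) h

      · -- inductive case
        have hx := hrec (t - (s+1))
        rw [Nat.sub_add_cancel ht] at hx
        have hFr := hrecF t ht
        -- peel j = 0 from both
        rw [Finset.sum_range_succ' _ (s+1)] at hx hFr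
        simp only [pow_zero, Nat.choose_zero_right, Nat.cast_one, one_mul, mul_one, Nat.sub_zero]
          at hx hFr
        have hsame : ∀ j ∈ Finset.range (s+1),
            (-1:ℝ)^(j+1) * ((s+1).choose (j+1) : ℝ) * ρ^(j+1) * x (t - (j+1))
            = (-1:ℝ)^(j+1) * ((s+1).choose (j+1) : ℝ) * ρ^(j+1) * F (t - (j+1)) := by
          intro j _
          rw [ih (t - (j+1)) (by omega)]
        rw [Finset.sum_congr rfl hsame] at hx
        have := hx.trans hFr.symm
        linarith
  -- final bounds
  intro t ht
  simp only [Nat.add_sub_cancel]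
  have hSeq : ∀ k ∈ Finset.Icc (s+1) t, ((t - k + (s+1) - 1).choose s : ℝ) * ρ ^ (t-k)
      = ((t - k + s).choose s : ℝ) * ρ ^ (t-k) := by
    intro k hk
    congr 2
  rw [Finset.sum_congr rfl hSeq]
  set α := ∑ i ∈ Finset.range (s+1), |lagrangeP (s+1) i t| * ρ ^ (t - i) with hα
  set S := ∑ k ∈ Finset.Icc (s+1) t, ((t - k + s).choose s : ℝ) * ρ ^ (t-k) with hS
  have hxle : x t ≤ α + ε * S := by
    rw [hform t, hF]
    have h1 : ∑ i ∈ Finset.range (s+1), x i * (L i).eval (t:ℝ) * ρ ^ ((t:ℤ) - (i:ℤ)) ≤ α := by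
      rw [hα]
      refine Finset.sum_le_sum fun i hi => ?_
      have hit : i ≤ t := by
        have := Finset.mem_range.mp hi; omega
      have hzp : ρ ^ ((t:ℤ) - (i:ℤ)) = ρ ^ (t - i : ℕ) := by
        rw [show (t:ℤ) - (i:ℤ) = ((t - i : ℕ) : ℤ) from by omega, zpow_natCast]
      rw [hzp, lag_eval_eq]
      have hpow : (0:ℝ) ≤ ρ ^ (t - i) := le_of_lt (pow_pos hρ0 _)
      have := hinit i (Finset.mem_range.mp hi)
      have h0 : (0:ℝ) ≤ |(Lagrange.basis (Finset.range (s+1)) (fun j : ℕ => (j:ℝ)) i).eval (t:ℝ)| := abs_nonneg _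
      calc x i * (Lagrange.basis (Finset.range (s+1)) (fun j : ℕ => (j:ℝ)) i).eval (t:ℝ) * ρ ^ (t-i)
          ≤ |x i * (Lagrange.basis (Finset.range (s+1)) (fun j : ℕ => (j:ℝ)) i).eval (t:ℝ)| * ρ ^ (t-i) :=
            mul_le_mul_of_nonneg_right (le_abs_self _) hpow
        _ ≤ (1 * |(Lagrange.basis (Finset.range (s+1)) (fun j : ℕ => (j:ℝ)) i).eval (t:ℝ)|) * ρ ^ (t-i) := by
            refine mul_le_mul_of_nonneg_right ?_ hpow
            rw [abs_mul]
            exact mul_le_mul_of_nonneg_right this h0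
        _ = |(Lagrange.basis (Finset.range (s+1)) (fun j : ℕ => (j:ℝ)) i).eval (t:ℝ)| * ρ ^ (t-i) := by ring
    have h2 : ∑ k ∈ Finset.Icc (s+1) t, v k * B.eval ((t:ℝ) - (k:ℝ)) * ρ ^ ((t:ℤ) - (k:ℤ)) ≤ ε * S := by
      rw [hS, Finset.mul_sum]
      refine Finset.sum_le_sum fun k hk => ?_
      obtain ⟨hk1, hk2⟩ := Finset.mem_Icc.mp hk
      have hzp : ρ ^ ((t:ℤ) - (k:ℤ)) = ρ ^ (t - k : ℕ) := by
        rw [show (t:ℤ) - (k:ℤ) = ((t - k : ℕ) : ℤ) from by omega, zpow_natCast]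
      have hBev : B.eval ((t:ℝ) - (k:ℝ)) = ((t - k + s).choose s : ℝ) := by
        rw [show (t:ℝ) - (k:ℝ) = ((t - k : ℕ) : ℝ) from by push_cast [Nat.cast_sub hk2]; ring,
          hB, binomPoly_eval_nat]
      rw [hzp, hBev]
      have hpow : (0:ℝ) ≤ ρ ^ (t - k) := le_of_lt (pow_pos hρ0 _)
      have hC : (0:ℝ) ≤ ((t - k + s).choose s : ℝ) := Nat.cast_nonneg _
      have hvk : v k ≤ ε := le_trans (le_abs_self _) (hv k hk1)
      calc v k * ((t - k + s).choose s : ℝ) * ρ ^ (t-k)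
          = v k * (((t - k + s).choose s : ℝ) * ρ ^ (t-k)) := by ring
        _ ≤ ε * (((t - k + s).choose s : ℝ) * ρ ^ (t-k)) :=
            mul_le_mul_of_nonneg_right hvk (mul_nonneg hC hpow)
    exact add_le_add h1 h2
  have hαA : α ≤ A := hA1 t ht
  have hSlt : S < ((1 - ρ) ^ (s+1))⁻¹ := by
    have hre : S = ∑ j ∈ Finset.range (t - (s+1) + 1), ((j + s).choose s : ℝ) * ρ ^ j := by
      rw [hS]
      refine Finset.sum_nbij' (fun k => t - k) (fun j => t - j) ?_ ?_ ?_ ?_ ?_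
      · intro k hk
        obtain ⟨h1, h2⟩ := Finset.mem_Icc.mp hk
        exact Finset.mem_range.mpr (by omega)
      · intro j hj
        have := Finset.mem_range.mp hj
        exact Finset.mem_Icc.mpr (by omega)
      · intro k hk
        obtain ⟨h1, h2⟩ := Finset.mem_Icc.mp hk
        omega
      · intro j hj
        have := Finset.mem_range.mp hj
        omega
      · intro k _
        rfl
    have hp : (0:ℝ) < (1 - ρ) ^ (s+1) := pow_pos (by linarith) _
    rw [hre, inv_eq_one_div, lt_div_iff₀ hp, mul_comm]
    exact aux_pos ρ hρ0 hρ1 s (t - (s+1))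
  constructor
  · exact hxle
  · have := mul_lt_mul_of_pos_left hSlt hε
    linarith
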